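/- Let G = (V,E) be a DAG, i ∈ V, and A ⊆ V \ {i}. Suppose there is a node k ∈ pa(i) with k ∉ A. Fix ω ∈ (0,∞)^V. Then there exists Λ ∈ ℝ^E such that the covariance matrix Σ = (I−Λ)^{-T} diag(ω) (I−Λ)^{-1} satisfies ω_i ≠ Σ_{ii} − Σ_{i,A} (Σ_{A,A})^{-1} Σ_{A,i}. (One may take Λ with the single nonzero entry λ_{ki}, in which case Σ_{i,A} = 0 and Σ_{ii} = ω_i + λ_{ki}² ω_k > ω_i.) -/

import Mathlib

open Matrix

/-- The conditional variance `Σ_{ii} - Σ_{i,A} (Σ_{A,A})⁻¹ Σ_{A,i}` of variable `i`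
given the variables in `A`. -/
noncomputable def condVar {V : Type*} [Fintype V] [DecidableEq V]
    (Cov : Matrix V V ℝ) (i : V) (A : Finset V) : ℝ :=
  Cov i i - ∑ a : A, ∑ b : A,
    Cov i a * (Cov.submatrix (Subtype.val : A → V) Subtype.val)⁻¹ a b * Cov b i

/-- if `A ⊆ V \ {i}` misses a parent `k` of `i`, then for any fixed positive
error variances `ω` there is `Λ ∈ ℝ^E` such that the induced covariance matrix
`Σ = (I-Λ)^{-T} diag(ω) (I-Λ)^{-1}` satisfies `ω i ≠ Σ_{ii} - Σ_{i,A}(Σ_{A,A})⁻¹Σ_{A,i}`. -/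
theorem stmt4 {V : Type*} [Fintype V] [DecidableEq V]
    (E : V → V → Prop) (hacyc : ∀ i, ¬ Relation.TransGen E i i)
    (i k : V) (A : Finset V) (hiA : i ∉ A)
    (hk : E k i) (hkA : k ∉ A)
    (ω : V → ℝ) (hω : ∀ a, 0 < ω a) :
    ∃ Λ : Matrix V V ℝ, (∀ a b, ¬ E a b → Λ a b = 0) ∧
      ω i ≠ condVar (((1 - Λ)ᵀ)⁻¹ * Matrix.diagonal ω * (1 - Λ)⁻¹) i A := by
  classical
  have hki : k ≠ i := by
    rintro rfl
    exact hacyc k (Relation.TransGen.single hk)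
  set Λ : Matrix V V ℝ := Matrix.single k i 1 with hΛdef
  have hΛT : Λᵀ = Matrix.single i k 1 := by
    ext a b
    simp [hΛdef, Matrix.single, and_comm]
  have hΛΛ : Λ * Λ = 0 :=
    Matrix.single_mul_single_of_ne (i := k) (j := i) (k := k) (h := Ne.symm hki) ..
  have hinv : (1 - Λ)⁻¹ = 1 + Λ := by
    apply Matrix.inv_eq_right_inv
    have h : (1 - Λ) * (1 + Λ) = 1 - Λ * Λ := by noncomm_ring
    rw [h, hΛΛ, sub_zero]
  have hinvT : ((1 - Λ)ᵀ)⁻¹ = 1 + Λᵀ := by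
    apply Matrix.inv_eq_right_inv
    have h2 : Λᵀ * Λᵀ = 0 := by
      rw [← Matrix.transpose_mul, hΛΛ, Matrix.transpose_zero]
    have h : (1 - Λ)ᵀ * (1 + Λᵀ) = 1 - Λᵀ * Λᵀ := by
      rw [Matrix.transpose_sub, Matrix.transpose_one]; noncomm_ring
    rw [h, h2, sub_zero]
  set D : Matrix V V ℝ := Matrix.diagonal ω with hDdef
  set Cov : Matrix V V ℝ := ((1 - Λ)ᵀ)⁻¹ * D * (1 - Λ)⁻¹ with hCovdef
  have hCov' : Cov = D + Λᵀ * D + D * Λ + Λᵀ * D * Λ := by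
    rw [hCovdef, hinv, hinvT]; noncomm_ring
  -- entry computations
  have hCovia : ∀ a : V, a ≠ i → a ≠ k → Cov i a = 0 := by
    intro a hai hak
    have e1 : Matrix.single k i (1:ℝ) i a = 0 :=
      Matrix.single_apply_of_ne _ _ _ _ _ (by tauto)
    have e2 : Matrix.single i k (1:ℝ) i a = 0 :=
      Matrix.single_apply_of_ne _ _ _ _ _ (by tauto)
    simp only [hCov', hΛT, hΛdef, hDdef, Matrix.add_apply, Matrix.mul_assoc]
    simp [Matrix.diagonal_apply_ne' _ hai, Matrix.diagonal_apply_ne' _ hak, e1, e2,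
      hai.symm, hak.symm, Matrix.diagonal_apply_ne _ hki]
  have hCovai : ∀ a : V, a ≠ i → a ≠ k → Cov a i = 0 := by
    intro a hai hak
    have e1 : Matrix.single k i (1:ℝ) a i = 0 :=
      Matrix.single_apply_of_ne _ _ _ _ _ (by tauto)
    have e2 : Matrix.single i k (1:ℝ) a i = 0 :=
      Matrix.single_apply_of_ne _ _ _ _ _ (by tauto)
    simp only [hCov', hΛT, hΛdef, hDdef, Matrix.add_apply, Matrix.mul_assoc]
    simp [Matrix.diagonal_apply_ne _ hai, Matrix.diagonal_apply_ne' _ hak, e1, e2,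
      hai, hak, Matrix.diagonal_apply_ne _ hki]
  have hCovii : Cov i i = ω i + ω k := by
    have e1 : Matrix.single k i (1:ℝ) i i = 0 :=
      Matrix.single_apply_of_ne _ _ _ _ _ (by tauto)
    have e2 : Matrix.single i k (1:ℝ) i i = 0 :=
      Matrix.single_apply_of_ne _ _ _ _ _ (by tauto)
    simp only [hCov', hΛT, hΛdef, hDdef, Matrix.add_apply, Matrix.mul_assoc]
    simp [Matrix.diagonal_apply_ne _ hki, Matrix.diagonal_apply_ne' _ hki, e1, e2, hki]
  refine ⟨Λ, ?_, ?_⟩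
  · intro a b hab
    rcases eq_or_ne a k with rfl | ha
    · rcases eq_or_ne b i with rfl | hb
      · exact absurd hk hab
      · exact Matrix.single_apply_of_ne _ _ _ a b (by tauto)
    · exact Matrix.single_apply_of_ne _ _ _ a b (by tauto)
  · have hsum : condVar Cov i A = ω i + ω k := by
      unfold condVar
      rw [hCovii]
      have : ∀ a : A, ∀ b : A,
          Cov i a * (Cov.submatrix (Subtype.val : A → V) Subtype.val)⁻¹ a b * Cov b i = 0 := by
        intro a b
        have hai : (a : V) ≠ i := fun h => hiA (h ▸ a.2)
        have hak : (a : V) ≠ k := fun h => hkA (h ▸ a.2)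
        rw [hCovia a hai hak, zero_mul, zero_mul]
      rw [Finset.sum_congr rfl fun a _ => Finset.sum_congr rfl fun b _ => this a b]
      simp
    rw [hsum]
    have := hω k
    intro h
    linarith
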